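/- Let n ≥ 2 and let a, b be complex numbers with |a| = 1, a ≠ −1, b ≠ 0, and a + n·b = −1. Let κ be a complex number with Re κ > 0. For d > 0 define u(d) = −n/d and v(d) = −1/d − i(a−1)/(a+1); define G^{u}_κ(x,y) = e^{−κ·max(x,y)}·((u(d)/n)·sinh(κ·min(x,y)) + κ·cosh(κ·min(x,y)))/(κ·(u(d)/n + κ)), the Krein kernel G^{u,v}_{κ,d}(x,y) = G^{u}_κ(x,y) + G^{u}_κ(x,d)·G^{u}_κ(d,y)/(−v(d)⁻¹ − G^{u}_κ(d,d)), and the Dirichlet kernel G_κ(x,y) = κ⁻¹·sinh(κ·min(x,y))·e^{−κ·max(x,y)}. Then ∫₀^∞∫₀^∞ |G^{u,v}_{κ,d}(x,y) − G_κ(x,y)|² dx dy → 0 as d → 0+ (the kernels being well defined for all sufficiently small d > 0). -/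

import Mathlib

open Complex Set Filter MeasureTheory

/-- Green function of the negative Laplacian on the half-line with Robin
condition `ψ'(0) = (u/n)ψ(0)` at the origin. -/
noncomputable def greenU (n : ℕ) (u κ : ℂ) (x y : ℝ) : ℂ :=
  Complex.exp (-κ * (max x y : ℝ))
    * ((u / n) * Complex.sinh (κ * (min x y : ℝ))
        + κ * Complex.cosh (κ * (min x y : ℝ)))
    / (κ * (u / n + κ))

/-- Krein-formula Green function obtained from `greenU` by adding a
δ interaction of strength `v` at the point `d`. -/
noncomputable def greenUv (n : ℕ) (u v κ : ℂ) (d x y : ℝ) : ℂ :=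
  greenU n u κ x y
    + greenU n u κ x d * greenU n u κ d y / (-v⁻¹ - greenU n u κ d d)

/-- Green function of the negative Laplacian on the half-line with boundary
condition `(a+nb-1)ψ(0) + i(a+nb+1)ψ'(0) = 0` at the origin. -/
noncomputable def greenAB (n : ℕ) (a b κ : ℂ) (x y : ℝ) : ℂ :=
  Complex.exp (-κ * (max x y : ℝ))
    * (Complex.I * (a + n * b - 1) * Complex.sinh (κ * (min x y : ℝ))
        + κ * (a + n * b + 1) * Complex.cosh (κ * (min x y : ℝ)))
    / (κ * (Complex.I * (a + n * b - 1) + κ * (a + n * b + 1)))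

/-- The coupling strength of the δ interactions at distance `d`. -/
noncomputable def vCoupling (a : ℂ) (d : ℝ) : ℂ :=
  -1 / (d : ℂ) - Complex.I * (a - 1) / (a + 1)

/-- The strength of the δ coupling at the vertex in the generic case. -/
noncomputable def uCoupling (n : ℕ) (a b : ℂ) (d : ℝ) : ℂ :=
  (Complex.I * n / (d : ℂ) ^ 2)
    * ((a - 1 + n * b) / (a + 1 + n * b) + (a - 1) / (a + 1))⁻¹

/-- Green function of the Dirichlet negative Laplacian on the half-line. -/
noncomputable def greenD (κ : ℂ) (x y : ℝ) : ℂ :=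
  κ⁻¹ * Complex.sinh (κ * (min x y : ℝ)) * Complex.exp (-κ * (max x y : ℝ))


set_option maxHeartbeats 1000000


lemma exp_half_le_two : Real.exp (1/2) ≤ 2 := by
  have h : Real.exp (1/2) ^ 2 = Real.exp 1 := by
    rw [sq, ← Real.exp_add]; norm_num
  nlinarith [Real.exp_pos (1/2 : ℝ), Real.exp_one_lt_d9]

lemma abs_sinh_le {z : ℂ} (hz : ‖z‖ ≤ 1/2) :
    ‖Complex.sinh z‖ ≤ 4 * ‖z‖ := by
  have h23 : Complex.exp (-z) * Complex.exp (2*z) = Complex.exp z := by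
    rw [← Complex.exp_add]; congr 1; ring
  have hid : Complex.sinh z = Complex.exp (-z) * (Complex.exp (2*z) - 1) / 2 := by
    unfold Complex.sinh
    linear_combination (-(1:ℂ)/2) * h23
  have h2z : ‖2*z‖ ≤ 1 := by
    rw [norm_mul]; simp only [Complex.norm_two]; linarith
  have he : ‖Complex.exp (-z)‖ ≤ 2 := by
    rw [Complex.norm_exp]
    have : (-z).re ≤ 1/2 := le_trans (Complex.re_le_norm _) (by simpa using hz)
    exact le_trans (Real.exp_le_exp.2 this) exp_half_le_two
  have hb := Complex.norm_exp_sub_one_le h2z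
  calc ‖Complex.sinh z‖
      = ‖Complex.exp (-z)‖ * ‖Complex.exp (2*z) - 1‖ / 2 := by
        rw [hid, norm_div, norm_mul]; norm_num
    _ ≤ 2 * (2 * ‖2*z‖) / 2 := by
        gcongr
    _ = 4 * ‖z‖ := by rw [norm_mul]; simp only [Complex.norm_two]; ring

lemma abs_cosh_le {z : ℂ} (hz : ‖z‖ ≤ 1/2) :
    ‖Complex.cosh z‖ ≤ 2 := by
  unfold Complex.cosh
  have h1 : ‖Complex.exp z‖ ≤ 2 := by
    rw [Complex.norm_exp]
    exact le_trans (Real.exp_le_exp.2 (le_trans (Complex.re_le_norm _) hz)) exp_half_le_two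
  have h2 : ‖Complex.exp (-z)‖ ≤ 2 := by
    rw [Complex.norm_exp]
    have : (-z).re ≤ 1/2 := le_trans (Complex.re_le_norm _) (by simpa using hz)
    exact le_trans (Real.exp_le_exp.2 this) exp_half_le_two
  rw [norm_div, Complex.norm_two]
  have := norm_add_le (Complex.exp z) (Complex.exp (-z))
  linarith

lemma taylor_bound {z : ℂ} (hz : ‖z‖ ≤ 1) :
    ‖z * Complex.cosh z - Complex.sinh z‖ ≤ ‖z‖ ^ 3 := by
  have h1 := Complex.exp_bound hz (n := 3) (by norm_num)
  have h2 := Complex.exp_bound (x := -z) (by simpa using hz) (n := 3) (by norm_num)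
  have hs : ∑ m ∈ Finset.range 3, z ^ m / (m.factorial : ℂ) = 1 + z + z^2/2 := by
    rw [Finset.sum_range_succ, Finset.sum_range_succ, Finset.sum_range_succ,
      Finset.sum_range_zero]
    norm_num [Nat.factorial]
  have hs' : ∑ m ∈ Finset.range 3, (-z) ^ m / (m.factorial : ℂ) = 1 - z + z^2/2 := by
    rw [Finset.sum_range_succ, Finset.sum_range_succ, Finset.sum_range_succ,
      Finset.sum_range_zero]
    norm_num [Nat.factorial]
    ring
  rw [hs] at h1; rw [hs'] at h2
  set E₁ := Complex.exp z - (1 + z + z^2/2) with hE₁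
  set E₂ := Complex.exp (-z) - (1 - z + z^2/2) with hE₂
  have key : z * Complex.cosh z - Complex.sinh z
      = (z^3 + (z-1)*E₁ + (z+1)*E₂)/2 := by
    unfold Complex.cosh Complex.sinh
    rw [hE₁, hE₂]
    ring
  have habs1 : ‖z - 1‖ ≤ 2 := by
    have := norm_add_le z (-1)
    simp only [← sub_eq_add_neg, norm_neg, norm_one] at this
    linarith
  have habs2 : ‖z + 1‖ ≤ 2 := by
    have := norm_add_le z 1
    simp only [norm_one] at this
    linarith
  have hb1 : ‖E₁‖ ≤ ‖z‖ ^ 3 * (2/9) := by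
    refine h1.trans_eq ?_
    norm_num [Nat.factorial]
  have hb2 : ‖E₂‖ ≤ ‖z‖ ^ 3 * (2/9) := by
    rw [norm_neg] at h2
    refine h2.trans_eq ?_
    norm_num [Nat.factorial]
  have m1 : ‖(z-1)*E₁‖ ≤ 2 * (‖z‖^3*(2/9)) := by
    rw [norm_mul]
    exact mul_le_mul habs1 hb1 (norm_nonneg _) (by norm_num)
  have m2 : ‖(z+1)*E₂‖ ≤ 2 * (‖z‖^3*(2/9)) := by
    rw [norm_mul]
    exact mul_le_mul habs2 hb2 (norm_nonneg _) (by norm_num)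
  have u1 := norm_add_le (z^3 + (z-1)*E₁) ((z+1)*E₂)
  have u2 := norm_add_le (z^3) ((z-1)*E₁)
  have p : ‖z^3‖ = ‖z‖ ^ 3 := norm_pow _ _
  rw [key, norm_div, Complex.norm_two]
  nlinarith [pow_nonneg (norm_nonneg z) 3]

lemma stmt19_master (n : ℕ) (hn : 2 ≤ n) (a : ℂ) (κ : ℂ) (hκ : 0 < κ.re)
    (u : ℝ → ℂ) (hu : ∀ d : ℝ, 0 < d → u d = -(n : ℂ) / (d : ℂ))
    (d : ℝ) (hd : 0 < d)
    (hdK : ‖κ‖ * d ≤ 1/3)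
    (hdW : d * ‖Complex.I * (a - 1) / (a + 1)‖ ≤ 1/2) :
    (u d / n + κ ≠ 0) ∧ (-(vCoupling a d)⁻¹ - greenU n (u d) κ d d ≠ 0) ∧
    ∀ x : ℝ, 0 ≤ x → ∀ y : ℝ, 0 ≤ y →
      ‖greenUv n (u d) (vCoupling a d) κ d x y - greenD κ x y‖
        ≤ 434 * d * Real.exp (-κ.re * (x + y)) := by
  have hκ0 : κ ≠ 0 := fun h => by simp [h] at hκ
  set r := κ.re with hr
  set K := ‖κ‖ with hK
  have hK0 : 0 < K := norm_pos_iff.mpr hκ0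
  have hd0C : (d : ℂ) ≠ 0 := by exact_mod_cast hd.ne'
  have hnC : (n : ℂ) ≠ 0 := Nat.cast_ne_zero.2 (by omega)
  have hud : u d / (n : ℂ) = -1 / (d : ℂ) := by
    rw [hu d hd]; field_simp
  set w := Complex.I * (a - 1) / (a + 1) with hw
  set W := ‖w‖ with hW
  have hW0 : 0 ≤ W := norm_nonneg _
  have habsd : ‖-1 / (d : ℂ)‖ = 1 / d := by
    rw [norm_div, norm_neg, norm_one, Complex.norm_real, Real.norm_eq_abs, abs_of_pos hd]
  -- lower bound on |c+κ|
  have hcp : 1 / (2 * d) ≤ ‖-1 / (d : ℂ) + κ‖ := by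
    have tri := norm_add_le (-1 / (d : ℂ) + κ) (-κ)
    have h' : (-1 / (d : ℂ) + κ) + -κ = -1 / (d : ℂ) := by ring
    rw [h', norm_neg, habsd] at tri
    have hK3 : K ≤ 1 / (3 * d) := by
      rw [le_div_iff₀ (by positivity)]; linarith [hdK]
    have : 1 / d - 1 / (3 * d) ≤ ‖-1 / (d : ℂ) + κ‖ := by
      rw [← hK] at tri; linarith
    have e : 1 / d - 1 / (3 * d) = 2 / (3 * d) := by field_simp; ring
    rw [e] at this
    refine le_trans ?_ this
    rw [div_le_div_iff₀ (by positivity) (by positivity)]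
    nlinarith
  have hcpne : -1 / (d : ℂ) + κ ≠ 0 := by
    intro h
    rw [h, norm_zero] at hcp
    have : 0 < 1 / (2 * d) := by positivity
    linarith
  have goal1 : u d / (n:ℂ) + κ ≠ 0 := by rw [hud]; exact hcpne
  -- numerator bound
  have num_bound : ∀ m : ℝ, 0 ≤ m → m ≤ d →
      ‖(-1 / (d:ℂ)) * Complex.sinh (κ * (m:ℝ)) + κ * Complex.cosh (κ * (m:ℝ))‖
        ≤ 6 * K := by
    intro m hm hmd
    have habsz : ‖κ * (m:ℝ)‖ = K * m := by
      rw [norm_mul, Complex.norm_real, Real.norm_eq_abs, _root_.abs_of_nonneg hm]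
    have hz12 : ‖κ * (m:ℝ)‖ ≤ 1/2 := by
      rw [habsz]
      nlinarith [mul_le_mul_of_nonneg_left hmd hK0.le]
    have h1 : ‖(-1 / (d:ℂ)) * Complex.sinh (κ * (m:ℝ))‖ ≤ 4 * K := by
      rw [norm_mul, habsd]
      have := abs_sinh_le hz12
      rw [habsz] at this
      calc 1 / d * ‖Complex.sinh (κ * (m:ℝ))‖ ≤ 1 / d * (4 * (K * m)) := by
            apply mul_le_mul_of_nonneg_left this (by positivity)
        _ ≤ 4 * K := by
            rw [div_mul_eq_mul_div, mul_comm]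
            rw [div_le_iff₀ hd]
            nlinarith [mul_le_mul_of_nonneg_left hmd hK0.le]
    have h2 : ‖κ * Complex.cosh (κ * (m:ℝ))‖ ≤ 2 * K := by
      rw [norm_mul]
      have := abs_cosh_le hz12
      nlinarith
    have tri := norm_add_le ((-1 / (d:ℂ)) * Complex.sinh (κ * (m:ℝ)))
      (κ * Complex.cosh (κ * (m:ℝ)))
    linarith
  -- phi bound
  have phi_bound : ∀ x : ℝ, 0 ≤ x →
      ‖greenU n (u d) κ x d‖ ≤ 12 * d * Real.exp (-r * x) := by
    intro x hx
    rw [greenU, hud]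
    rw [norm_div, norm_mul]
    have hE : ‖Complex.exp (-κ * ((max x d : ℝ) : ℂ))‖ ≤ Real.exp (-r * x) := by
      rw [Complex.norm_exp]
      apply Real.exp_le_exp.2
      have : (-κ * ((max x d : ℝ) : ℂ)).re = -r * max x d := by
        simp [Complex.mul_re, hr]
      rw [this]
      have : x ≤ max x d := le_max_left _ _
      nlinarith
    have hmin0 : (0:ℝ) ≤ min x d := le_min hx hd.le
    have hminle : min x d ≤ d := min_le_right _ _
    have hN := num_bound (min x d) hmin0 hminle
    have hDen : K * (1 / (2 * d)) ≤ ‖κ * (-1 / (d:ℂ) + κ)‖ := by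
      rw [norm_mul, ← hK]
      exact mul_le_mul_of_nonneg_left hcp hK0.le
    calc ‖Complex.exp (-κ * ((max x d : ℝ) : ℂ))‖
          * ‖(-1 / (d:ℂ)) * Complex.sinh (κ * ((min x d : ℝ):ℂ))
            + κ * Complex.cosh (κ * ((min x d : ℝ):ℂ))‖
          / ‖κ * (-1 / (d:ℂ) + κ)‖
        ≤ (Real.exp (-r * x) * (6 * K)) / (K * (1 / (2 * d))) := by
          apply div_le_div₀ (by positivity) ?_ (by positivity) hDen
          exact mul_le_mul hE hN (norm_nonneg _) (Real.exp_pos _).le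
      _ = 12 * d * Real.exp (-r * x) := by
          field_simp
          ring
  -- v bounds
  have hWd : W ≤ 1 / (2 * d) := by
    rw [le_div_iff₀ (by positivity)]; linarith [hdW]
  have hv_ub : ‖vCoupling a d‖ ≤ 3 / (2 * d) := by
    have tri := norm_add_le (-1 / (d:ℂ)) (-w)
    have h' : (-1 / (d:ℂ)) + -w = vCoupling a d := by rw [vCoupling, hw]; ring
    rw [h', norm_neg, habsd, ← hW] at tri
    have : 1 / d + 1 / (2 * d) = 3 / (2 * d) := by field_simp; ring
    linarith
  have hv_lb : 1 / (2 * d) ≤ ‖vCoupling a d‖ := by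
    have tri := norm_add_le (vCoupling a d) w
    have h' : vCoupling a d + w = -1 / (d:ℂ) := by rw [vCoupling, hw]; ring
    rw [h', habsd, ← hW] at tri
    have e : 1 / d - 1 / (2 * d) = 1 / (2 * d) := by field_simp; ring
    linarith
  have hvne : vCoupling a d ≠ 0 := by
    intro h; rw [h, norm_zero] at hv_lb
    have : 0 < 1 / (2 * d) := by positivity
    linarith
  have hvinv : 2 * d / 3 ≤ ‖(vCoupling a d)⁻¹‖ := by
    rw [norm_inv]
    have h1 : 0 < ‖vCoupling a d‖ := norm_pos_iff.mpr hvne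
    rw [le_inv_comm₀ (by positivity) h1]
    calc ‖vCoupling a d‖ ≤ 3 / (2 * d) := hv_ub
      _ = (2 * d / 3)⁻¹ := by field_simp
  -- G(d,d) bound
  have hGdd : ‖greenU n (u d) κ d d‖ ≤ (2/9) * d := by
    rw [greenU, hud, min_self, max_self]
    rw [norm_div, norm_mul]
    have habsz : ‖κ * (d:ℝ)‖ = K * d := by
      rw [norm_mul, Complex.norm_real, Real.norm_eq_abs, _root_.abs_of_pos hd]
    have hz1 : ‖κ * (d:ℝ)‖ ≤ 1 := by rw [habsz]; linarith
    have hnum : (-1 / (d:ℂ)) * Complex.sinh (κ * (d:ℝ)) + κ * Complex.cosh (κ * (d:ℝ))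
        = (1 / (d:ℂ)) * ((κ * (d:ℝ)) * Complex.cosh (κ * (d:ℝ)) - Complex.sinh (κ * (d:ℝ))) := by
      field_simp
      ring
    have hNb : ‖(-1 / (d:ℂ)) * Complex.sinh (κ * (d:ℝ))
        + κ * Complex.cosh (κ * (d:ℝ))‖ ≤ (1/d) * (K * d)^3 := by
      rw [hnum, norm_mul]
      have h1 : ‖1 / (d:ℂ)‖ = 1 / d := by
        rw [norm_div, norm_one, Complex.norm_real, Real.norm_eq_abs, _root_.abs_of_pos hd]
      rw [h1]
      have := taylor_bound hz1
      rw [habsz] at this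
      apply mul_le_mul_of_nonneg_left this (by positivity)
    have hE1 : ‖Complex.exp (-κ * ((d:ℝ):ℂ))‖ ≤ 1 := by
      rw [Complex.norm_exp, Real.exp_le_one_iff]
      have : (-κ * ((d:ℝ):ℂ)).re = -r * d := by simp [Complex.mul_re, hr]
      rw [this]; nlinarith
    have hDen : K * (1 / (2 * d)) ≤ ‖κ * (-1 / (d:ℂ) + κ)‖ := by
      rw [norm_mul, ← hK]
      exact mul_le_mul_of_nonneg_left hcp hK0.le
    calc ‖Complex.exp (-κ * ((d:ℝ):ℂ))‖
          * ‖(-1 / (d:ℂ)) * Complex.sinh (κ * ((d:ℝ):ℂ))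
            + κ * Complex.cosh (κ * ((d:ℝ):ℂ))‖
          / ‖κ * (-1 / (d:ℂ) + κ)‖
        ≤ (1 * ((1/d) * (K * d)^3)) / (K * (1 / (2 * d))) := by
          apply div_le_div₀ (by positivity) ?_ (by positivity) hDen
          exact mul_le_mul hE1 hNb (norm_nonneg _) one_pos.le
      _ ≤ (2/9) * d := by
          have hKne : K ≠ 0 := hK0.ne'
          have hdne : d ≠ 0 := hd.ne'
          rw [div_le_iff₀ (by positivity)]
          have e : (2/9)*d*(K*(1/(2*d))) = K/9 := by field_simp
          have e2 : 1*((1/d)*(K*d)^3) = K^3*d^2 := by field_simp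
          rw [e, e2]
          have h2 : (K*d)^2 ≤ 1/9 := by
            have := mul_le_mul hdK hdK (by positivity) (by norm_num)
            nlinarith
          nlinarith [mul_le_mul_of_nonneg_left h2 hK0.le]
  -- D bound
  have hDlb : d / 3 ≤ ‖-(vCoupling a d)⁻¹ - greenU n (u d) κ d d‖ := by
    have tri := norm_add_le
      (-(vCoupling a d)⁻¹ - greenU n (u d) κ d d) (greenU n (u d) κ d d)
    have h' : (-(vCoupling a d)⁻¹ - greenU n (u d) κ d d) + greenU n (u d) κ d d
        = -(vCoupling a d)⁻¹ := by ring
    rw [h', norm_neg] at tri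
    linarith
  have goal2 : -(vCoupling a d)⁻¹ - greenU n (u d) κ d d ≠ 0 := by
    intro h; rw [h, norm_zero] at hDlb; linarith
  -- difference identity
  have hdiff : ∀ x y : ℝ,
      greenU n (u d) κ x y - greenD κ x y
        = Complex.exp (-κ * ((x + y : ℝ) : ℂ)) / (-1 / (d:ℂ) + κ) := by
    intro x y
    rw [greenU, greenD, hud]
    have hmm : (min x y) + (max x y) = x + y := by
      rcases le_total x y with h | h <;>
        simp [min_eq_left, max_eq_right, min_eq_right, max_eq_left, h] <;> ring
    have hmmC : ((x + y : ℝ) : ℂ) = ((max x y : ℝ) : ℂ) + ((min x y : ℝ) : ℂ) := by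
      rw [← Complex.ofReal_add]
      exact_mod_cast congrArg Complex.ofReal (by linarith [hmm])
    have hexp : Complex.exp (-κ * ((x + y : ℝ) : ℂ))
        = Complex.exp (-κ * ((max x y : ℝ) : ℂ)) * Complex.exp (-κ * ((min x y : ℝ) : ℂ)) := by
      rw [← Complex.exp_add]
      congr 1
      rw [hmmC]; ring
    have hC : Complex.cosh (κ * ((min x y : ℝ) : ℂ))
        = Complex.sinh (κ * ((min x y : ℝ) : ℂ)) + Complex.exp (-κ * ((min x y : ℝ) : ℂ)) := by
      have h0 := Complex.cosh_sub_sinh (κ * ((min x y : ℝ) : ℂ))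
      have h1 : -(κ * ((min x y : ℝ) : ℂ)) = -κ * ((min x y : ℝ) : ℂ) := by ring
      rw [h1] at h0
      linear_combination h0
    have hrepr : -1 / (d:ℂ) + κ = ((-1:ℂ) + κ * (d:ℂ)) / (d:ℂ) := by field_simp
    have hne2 : (-1:ℂ) + κ * (d:ℂ) ≠ 0 := by
      intro h; apply hcpne; rw [hrepr, h, zero_div]
    rw [hC, hexp]
    field_simp [hκ0, hd0C, hne2]
    ring
  have hrxy : ∀ x y : ℝ, ‖Complex.exp (-κ * ((x + y : ℝ) : ℂ))‖
      = Real.exp (-r * (x + y)) := by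
    intro x y
    rw [Complex.norm_exp]
    congr 1
    simp [Complex.mul_re, hr]
  refine ⟨goal1, goal2, ?_⟩
  intro x hx y hy
  have hsplit : greenUv n (u d) (vCoupling a d) κ d x y - greenD κ x y
      = (greenU n (u d) κ x y - greenD κ x y)
        + greenU n (u d) κ x d * greenU n (u d) κ d y
            / (-(vCoupling a d)⁻¹ - greenU n (u d) κ d d) := by
    rw [greenUv]; ring
  have hee : Real.exp (-r*x) * Real.exp (-r*y) = Real.exp (-r*(x+y)) := by
    rw [← Real.exp_add]; ring_nf
  have t1 : ‖greenU n (u d) κ x y - greenD κ x y‖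
      ≤ 2 * d * Real.exp (-r * (x + y)) := by
    rw [hdiff x y, norm_div, hrxy]
    calc Real.exp (-r*(x+y)) / ‖-1/(d:ℂ) + κ‖
        ≤ Real.exp (-r*(x+y)) / (1/(2*d)) :=
          div_le_div₀ (Real.exp_pos _).le le_rfl (by positivity) hcp
      _ = 2 * d * Real.exp (-r*(x+y)) := by
          field_simp
  have hsymm : greenU n (u d) κ d y = greenU n (u d) κ y d := by
    rw [greenU, greenU, min_comm d y, max_comm d y]
  have t2 : ‖greenU n (u d) κ x d * greenU n (u d) κ d y
        / (-(vCoupling a d)⁻¹ - greenU n (u d) κ d d)‖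
      ≤ 432 * d * Real.exp (-r * (x + y)) := by
    rw [norm_div, norm_mul]
    calc ‖greenU n (u d) κ x d‖ * ‖greenU n (u d) κ d y‖
          / ‖-(vCoupling a d)⁻¹ - greenU n (u d) κ d d‖
        ≤ (12 * d * Real.exp (-r * x)) * (12 * d * Real.exp (-r * y)) / (d/3) := by
          apply div_le_div₀ (by positivity) ?_ (by positivity) hDlb
          exact mul_le_mul (phi_bound x hx) (hsymm ▸ phi_bound y hy)
            (norm_nonneg _) (by positivity)
      _ = 432 * d * Real.exp (-r * (x + y)) := by
          rw [← hee]
          field_simp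
          ring
  rw [hsplit]
  calc ‖(greenU n (u d) κ x y - greenD κ x y)
        + greenU n (u d) κ x d * greenU n (u d) κ d y
            / (-(vCoupling a d)⁻¹ - greenU n (u d) κ d d)‖
      ≤ ‖greenU n (u d) κ x y - greenD κ x y‖
        + ‖greenU n (u d) κ x d * greenU n (u d) κ d y
            / (-(vCoupling a d)⁻¹ - greenU n (u d) κ d d)‖ := norm_add_le _ _
    _ ≤ 434 * d * Real.exp (-r * (x + y)) := by linarith



theorem stmt_19 (n : ℕ) (hn : 2 ≤ n) (a b : ℂ)
    (ha : ‖a‖ = 1) (ha' : a ≠ -1) (hb : b ≠ 0)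
    (hdp : a + n * b = -1)
    (κ : ℂ) (hκ : 0 < κ.re)
    (u : ℝ → ℂ) (hu : ∀ d : ℝ, 0 < d → u d = -(n : ℂ) / (d : ℂ)) :
    (∃ d₀ > (0 : ℝ), ∀ d : ℝ, 0 < d → d < d₀ →
      u d / n + κ ≠ 0
        ∧ -(vCoupling a d)⁻¹ - greenU n (u d) κ d d ≠ 0)
    ∧ Tendsto
        (fun d : ℝ => ∫ x in Ioi (0 : ℝ), ∫ y in Ioi (0 : ℝ),
          ‖greenUv n (u d) (vCoupling a d) κ d x y
              - greenD κ x y‖ ^ 2)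
        (nhdsWithin 0 (Ioi 0)) (nhds 0) := by
  have hκ0 : κ ≠ 0 := fun h => by simp [h] at hκ
  set r := κ.re with hr
  set K := ‖κ‖ with hK
  set W := ‖Complex.I * (a - 1) / (a + 1)‖ with hW
  have hK0 : 0 < K := norm_pos_iff.mpr hκ0
  have hW0 : 0 ≤ W := norm_nonneg _
  set d₀ : ℝ := min (1/(3*(K+1))) (1/(2*W+1)) with hd₀
  have hd₀pos : 0 < d₀ := lt_min (by positivity) (by positivity)
  have cond : ∀ d : ℝ, 0 < d → d < d₀ → (K * d ≤ 1/3 ∧ d * W ≤ 1/2) := by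
    intro d hd hlt
    constructor
    · have h1 : d ≤ 1/(3*(K+1)) := le_of_lt (lt_of_lt_of_le hlt (min_le_left _ _))
      rw [le_div_iff₀ (by positivity)] at h1
      nlinarith
    · have h2 : d ≤ 1/(2*W+1) := le_of_lt (lt_of_lt_of_le hlt (min_le_right _ _))
      rw [le_div_iff₀ (by positivity)] at h2
      nlinarith
  set F := fun d : ℝ => ∫ x in Ioi (0 : ℝ), ∫ y in Ioi (0 : ℝ),
      ‖greenUv n (u d) (vCoupling a d) κ d x y - greenD κ x y‖ ^ 2 with hF
  refine ⟨⟨d₀, hd₀pos, fun d hd hlt =>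
    ⟨(stmt19_master n hn a κ hκ u hu d hd (cond d hd hlt).1 (cond d hd hlt).2).1,
     (stmt19_master n hn a κ hκ u hu d hd (cond d hd hlt).1 (cond d hd hlt).2).2.1⟩⟩, ?_⟩
  have hint : IntegrableOn (fun y : ℝ => Real.exp (-(2*r)*y)) (Ioi 0) :=
    exp_neg_integrableOn_Ioi 0 (by positivity)
  set J := ∫ y in Ioi (0:ℝ), Real.exp (-(2*r)*y) with hJ
  have hF0 : ∀ d, 0 ≤ F d := fun d =>
    integral_nonneg fun x => integral_nonneg fun y => by positivity
  have hFle : ∀ d : ℝ, 0 < d → d < d₀ → F d ≤ (434*d)^2 * J * J := by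
    intro d hd hlt
    have hM := (stmt19_master n hn a κ hκ u hu d hd (cond d hd hlt).1 (cond d hd hlt).2).2.2
    have inner_le : ∀ x : ℝ, 0 < x →
        (∫ y in Ioi (0:ℝ),
            ‖greenUv n (u d) (vCoupling a d) κ d x y - greenD κ x y‖ ^ 2)
          ≤ ((434*d)^2 * Real.exp (-(2*r)*x)) * J := by
      intro x hx
      rw [hJ, ← integral_const_mul]
      apply integral_mono_of_nonneg
      · exact ae_of_all _ fun y => by positivity
      · exact hint.const_mul _
      · refine (ae_restrict_iff' measurableSet_Ioi).2 (ae_of_all _ fun y hy => ?_)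
        have hb := hM x hx.le y (le_of_lt hy)
        have hsq : ‖greenUv n (u d) (vCoupling a d) κ d x y - greenD κ x y‖ ^ 2
            ≤ (434*d*Real.exp (-r*(x+y)))^2 :=
          pow_le_pow_left₀ (norm_nonneg _) hb 2
        refine hsq.trans_eq ?_
        rw [mul_pow, sq (Real.exp (-r*(x+y))), ← Real.exp_add,
          show -r*(x+y) + -r*(x+y) = -(2*r)*x + -(2*r)*y by ring, Real.exp_add]
        ring
    calc F d ≤ ∫ x in Ioi (0:ℝ), ((434*d)^2 * J) * Real.exp (-(2*r)*x) := by
          apply integral_mono_of_nonneg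
          · exact ae_of_all _ fun x => integral_nonneg fun y => by positivity
          · exact hint.const_mul _
          · refine (ae_restrict_iff' measurableSet_Ioi).2 (ae_of_all _ fun x hx => ?_)
            refine (inner_le x hx).trans_eq ?_
            ring
      _ = (434*d)^2 * J * J := by
          rw [integral_const_mul]
  have hmem : Ioo (0:ℝ) d₀ ∈ nhdsWithin (0:ℝ) (Ioi 0) :=
    Ioo_mem_nhdsGT_of_mem ⟨le_refl 0, hd₀pos⟩
  apply squeeze_zero' (Eventually.of_forall hF0)
    (Filter.eventually_of_mem hmem fun d hd => hFle d hd.1 hd.2)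
  have hc : Continuous fun d : ℝ => (434*d)^2*J*J := by fun_prop
  have h2 : Tendsto (fun d : ℝ => (434*d)^2*J*J) (nhdsWithin 0 (Ioi 0)) (nhds ((434*(0:ℝ))^2*J*J)) :=
    (hc.tendsto 0).mono_left (nhdsWithin_le_nhds (s := Ioi (0:ℝ)))
  simpa using h2
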